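/- arXiv:2008.06930 — 10 statements merged into one kernel-verified Lean document; each statement's English description precedes it below -/
import Mathlib

section
/- Let k ≥ 1 and let v = (v₁,…,v_k) ∈ ℝ^k satisfy 0 ≤ v₁ ≤ ⋯ ≤ v_k ≤ 1, with mean v̄ = (1/k)Σᵢvᵢ. Define the seats-votes curve γ : ℝ → ℝ by γ(x) = (#{i : vᵢ + x − v̄ > 1/2})/k, and the jumps jᵢ = 1/2 + v̄ − v_{k+1−i} for 1 ≤ i ≤ k. Then the function x ↦ |γ(x) + γ(1−x) − 1| is integrable on ℝ and ∫_ℝ |γ(x) + γ(1−x) − 1| dx = (1/k) Σᵢ₌₁^k |jᵢ + j_{k+1−i} − 1| = (1/k) Σᵢ₌₁^k |vᵢ + v_{k+1−i} − 2v̄|. -/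
open MeasureTheory

private lemma pg_aux_ae (c d : ℝ) :
    (fun x : ℝ => |(if c < x then (1:ℝ) else 0) - (if d ≤ x then 1 else 0)|)
      =ᵐ[volume] (Set.Ioo (min c d) (max c d)).indicator (fun _ => (1:ℝ)) := by
  have hnull : volume ({c, d} : Set ℝ) = 0 :=
    Set.Finite.measure_zero (Set.Finite.insert _ (Set.finite_singleton _)) _
  rw [Filter.EventuallyEq, MeasureTheory.ae_iff]
  refine measure_mono_null ?_ hnull
  intro x hx
  simp only [Set.mem_setOf_eq] at hx
  by_contra hmem
  apply hx
  simp only [Set.mem_insert_iff, Set.mem_singleton_iff, not_or] at hmem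
  obtain ⟨hxc, hxd⟩ := hmem
  by_cases h1 : c < x <;> by_cases h2 : d ≤ x
  · -- x > c, x > d (since x ≠ d): outside interval
    have hdx : d < x := lt_of_le_of_ne h2 (Ne.symm hxd)
    simp only [h1, h2, if_true, Set.indicator_apply, Set.mem_Ioo]
    rw [if_neg, sub_self, abs_zero]
    rintro ⟨-, hlt⟩
    rcases max_cases c d with ⟨he, -⟩ | ⟨he, -⟩ <;> rw [he] at hlt <;> linarith
  · -- c < x < d : inside
    have hxd' : x < d := lt_of_not_ge h2
    simp only [h1, h2, if_true, if_false, Set.indicator_apply, Set.mem_Ioo]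
    rw [if_pos ⟨lt_of_le_of_lt (min_le_left c d) h1, lt_of_lt_of_le hxd' (le_max_right c d)⟩]
    norm_num
  · -- d < x < c (as x ≠ c, x ≠ d): inside
    have hxc' : x < c := lt_of_le_of_ne (le_of_not_gt h1) hxc
    have hdx : d < x := lt_of_le_of_ne h2 (Ne.symm hxd)
    simp only [h1, h2, if_false, if_true, Set.indicator_apply, Set.mem_Ioo]
    rw [if_pos ⟨lt_of_le_of_lt (min_le_right c d) hdx, lt_of_lt_of_le hxc' (le_max_left c d)⟩]
    norm_num
  · -- x ≤ c, x < d: outside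
    have hxc' : x ≤ c := le_of_not_gt h1
    have hxd' : x < d := lt_of_not_ge h2
    simp only [h1, h2, if_false, Set.indicator_apply, Set.mem_Ioo]
    rw [if_neg, sub_self, abs_zero]
    rintro ⟨hlt, -⟩
    rcases min_cases c d with ⟨he, -⟩ | ⟨he, -⟩ <;> rw [he] at hlt <;> linarith

private lemma pg_aux (c d : ℝ) :
    Integrable (fun x : ℝ => |(if c < x then (1:ℝ) else 0) - (if d ≤ x then 1 else 0)|) ∧
    (∫ x : ℝ, |(if c < x then (1:ℝ) else 0) - (if d ≤ x then 1 else 0)|) = |d - c| := by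
  have hae := pg_aux_ae c d
  have hint : Integrable ((Set.Ioo (min c d) (max c d)).indicator (fun _ => (1:ℝ))) := by
    rw [integrable_indicator_iff measurableSet_Ioo]
    exact integrableOn_const measure_Ioo_lt_top.ne
  refine ⟨hint.congr hae.symm, ?_⟩
  rw [integral_congr_ae hae, integral_indicator measurableSet_Ioo, setIntegral_const,
    measureReal_def, Real.volume_Ioo, ENNReal.toReal_ofReal (by simp [min_le_max] : (0:ℝ) ≤ max c d - min c d),
    smul_eq_mul, mul_one, max_sub_min_eq_abs]

/-- For a nondecreasing vote-share vector `v` with entries in `[0,1]`,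
mean `v̄`, seats-votes curve `γ(x) = #{i : vᵢ + x − v̄ > 1/2}/k` and jumps
`jᵢ = 1/2 + v̄ − v_{k+1−i}`, the function `x ↦ |γ(x) + γ(1−x) − 1|` is integrable on `ℝ`
and its integral equals `(1/k) Σᵢ |jᵢ + j_{k+1−i} − 1| = (1/k) Σᵢ |vᵢ + v_{k+1−i} − 2v̄|`. -/
theorem partisan_gini_integral_formula
    (k : ℕ) (hk : 1 ≤ k) (v : Fin k → ℝ)
    (hmono : Monotone v) (h0 : ∀ i, 0 ≤ v i) (h1 : ∀ i, v i ≤ 1)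
    (vbar : ℝ) (hvbar : vbar = (∑ i, v i) / k)
    (γ : ℝ → ℝ)
    (hγ : ∀ x, γ x = (Nat.card {i : Fin k // v i + x - vbar > 1 / 2} : ℝ) / k)
    (j : Fin k → ℝ) (hj : ∀ i, j i = 1 / 2 + vbar - v i.rev) :
    Integrable (fun x : ℝ => |γ x + γ (1 - x) - 1|) ∧
    (∫ x : ℝ, |γ x + γ (1 - x) - 1|) = (1 / k) * ∑ i, |j i + j i.rev - 1| ∧
    (1 / k) * ∑ i, |j i + j i.rev - 1| = (1 / k) * ∑ i, |v i + v i.rev - 2 * vbar| := by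
  have hk0 : (0:ℝ) < (k:ℝ) := by exact_mod_cast hk
  set d : Fin k → ℝ := fun i => v i + 1 / 2 - vbar with hd
  set t : ℝ → Fin k → ℝ :=
    fun x i => (if j i < x then (1:ℝ) else 0) - (if d i ≤ x then 1 else 0) with ht
  -- γ as a sum of indicators
  have hγsum : ∀ y : ℝ, γ y = (1 / k) * ∑ i : Fin k,
      (if (1 / 2 + vbar - v i) < y then (1:ℝ) else 0) := by
    intro y
    rw [hγ y, Nat.card_eq_fintype_card, Fintype.card_subtype, one_div_mul_eq_div]
    congr 1
    rw [Finset.card_filter]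
    push_cast
    refine Finset.sum_congr rfl fun i _ => ?_
    exact if_congr ⟨fun h => by linarith, fun h => by linarith⟩ rfl rfl
  -- the key pointwise expansion
  have h_expand : ∀ x : ℝ, γ x + γ (1 - x) - 1 = (1 / k) * ∑ i, t x i := by
    intro x
    have e1 : γ x = (1 / k) * ∑ i : Fin k, (if j i < x then (1:ℝ) else 0) := by
      rw [hγsum x]
      congr 1
      exact (Fintype.sum_equiv Fin.revPerm _ _ (fun i => by
        simp only [Fin.revPerm_apply, hj])).symm
    have e2 : γ (1 - x) = (1 / k) * ∑ i : Fin k, (if x < d i then (1:ℝ) else 0) := by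
      rw [hγsum (1 - x)]
      congr 1
      refine Finset.sum_congr rfl fun i _ => ?_
      refine if_congr ⟨fun h => by simp only [hd]; linarith, fun h => ?_⟩ rfl rfl
      simp only [hd] at h
      linarith
    rw [e1, e2, ← mul_add, ← Finset.sum_add_distrib]
    have hsum : ∑ i : Fin k, ((if j i < x then (1:ℝ) else 0) + (if x < d i then 1 else 0))
        = (∑ i, t x i) + k := by
      have hterm : ∀ i : Fin k,
          (if j i < x then (1:ℝ) else 0) + (if x < d i then 1 else 0) = t x i + 1 := by
        intro i
        by_cases h : d i ≤ x
        · simp [ht, h, not_lt.2 h]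
        · simp [ht, h, lt_of_not_ge h]
      rw [Finset.sum_congr rfl fun i _ => hterm i, Finset.sum_add_distrib, Finset.sum_const,
        Finset.card_univ, Fintype.card_fin, nsmul_eq_mul, mul_one]
    rw [hsum, mul_add, one_div_mul_cancel (ne_of_gt hk0)]
    ring
  -- monotonicity of the jump sequences
  have hjmono : Monotone j := by
    intro a b hab
    rw [hj a, hj b]
    have : v b.rev ≤ v a.rev := hmono (Fin.rev_le_rev.2 hab)
    linarith
  have hdmono : Monotone d := by
    intro a b hab
    simp only [hd]
    have := hmono hab
    linarith
  -- pointwise: abs of sum = sum of abs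
  have habs : ∀ x : ℝ, |∑ i, t x i| = ∑ i, |t x i| := by
    intro x
    by_cases hpos : ∀ i, 0 ≤ t x i
    · rw [abs_of_nonneg (Finset.sum_nonneg fun i _ => hpos i)]
      exact Finset.sum_congr rfl fun i _ => (abs_of_nonneg (hpos i)).symm
    · push_neg at hpos
      obtain ⟨i₀, hi₀⟩ := hpos
      have hkey : ¬ j i₀ < x ∧ d i₀ ≤ x := by
        by_cases hA : j i₀ < x <;> by_cases hB : d i₀ ≤ x <;>
          simp only [ht, hA, hB, if_true, if_false] at hi₀ ⊢ <;> norm_num at *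
      have hneg : ∀ i, t x i ≤ 0 := by
        intro i
        by_cases hA : j i < x <;> by_cases hB : d i ≤ x <;>
          simp only [ht, hA, hB, if_true, if_false] <;> try norm_num
        -- bad case: j i < x and ¬ d i ≤ x
        exfalso
        have h1 : j i < j i₀ := lt_of_lt_of_le hA (not_lt.1 hkey.1)
        have h2 : d i₀ < d i := lt_of_le_of_lt hkey.2 (lt_of_not_ge hB)
        have hii₀ : i < i₀ := by
          by_contra hc
          exact absurd (hjmono (not_lt.1 hc)) (not_le.2 h1)
        have hi₀i : i₀ < i := by
          by_contra hc
          exact absurd (hdmono (not_lt.1 hc)) (not_le.2 h2)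
        exact lt_asymm hii₀ hi₀i
      rw [abs_of_nonpos (Finset.sum_nonpos fun i _ => hneg i), ← Finset.sum_neg_distrib]
      exact Finset.sum_congr rfl fun i _ => (abs_of_nonpos (hneg i)).symm
  -- the pointwise formula for the integrand
  have hfun : (fun x : ℝ => |γ x + γ (1 - x) - 1|)
      = fun x : ℝ => (1 / k) * ∑ i, |t x i| := by
    funext x
    rw [h_expand x, abs_mul, abs_of_nonneg (by positivity : (0:ℝ) ≤ 1 / (k:ℝ)), habs x]
  have hint_i : ∀ i : Fin k, Integrable (fun x : ℝ => |t x i|) := fun i => (pg_aux (j i) (d i)).1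
  have hintsum : Integrable (fun x : ℝ => ∑ i, |t x i|) :=
    integrable_finset_sum _ fun i _ => hint_i i
  refine ⟨hfun ▸ hintsum.const_mul _, ?_, ?_⟩
  · rw [hfun, integral_const_mul, integral_finset_sum _ fun i _ => hint_i i]
    congr 1
    refine Finset.sum_congr rfl fun i _ => ?_
    rw [(pg_aux (j i) (d i)).2]
    have : d i - j i = -(j i + j i.rev - 1) := by
      simp only [hd, hj, Fin.rev_rev]
      ring
    rw [this, abs_neg]
  · congr 1
    refine Finset.sum_congr rfl fun i _ => ?_
    have : j i + j i.rev - 1 = -(v i + v i.rev - 2 * vbar) := by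
      simp only [hj, Fin.rev_rev]
      ring
    rw [this, abs_neg]
end

section
/- Let k ≥ 1 and let v = (v₁,…,v_k) ∈ ℝ^k satisfy 0 ≤ v₁ ≤ ⋯ ≤ v_k ≤ 1, with mean v̄ = (1/k)Σᵢvᵢ and median v_med (equal to v_{(k+1)/2} if k is odd and to (v_{k/2} + v_{k/2+1})/2 if k is even). If v_med > v̄, then #{i : vᵢ > v̄} ≥ ⌈k/2⌉; consequently, the seats-votes curve value γ(1/2) = (#{i : vᵢ > v̄})/k satisfies γ(1/2) ≥ 1/2, i.e. the partisan bias PB = γ(1/2) − 1/2 is nonnegative. -/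
/-- If the median exceeds the mean, then at least `⌈k/2⌉` districts have
vote share above the mean; consequently `γ(1/2) = #{i : vᵢ > v̄}/k ≥ 1/2`, i.e. the
partisan bias `PB = γ(1/2) − 1/2` is nonnegative. -/
theorem median_above_mean_implies_nonneg_partisan_bias
    (k : ℕ) (hk : 1 ≤ k) (v : Fin k → ℝ)
    (hmono : Monotone v) (h0 : ∀ i, 0 ≤ v i) (h1 : ∀ i, v i ≤ 1)
    (vbar : ℝ) (hvbar : vbar = (∑ i, v i) / k)
    (vmed : ℝ)
    (hvmed : if k % 2 = 1 then vmed = v ⟨(k - 1) / 2, by omega⟩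
      else vmed = (v ⟨k / 2 - 1, by omega⟩ + v ⟨k / 2, by omega⟩) / 2)
    (γ : ℝ → ℝ)
    (hγ : ∀ x, γ x = (Nat.card {i : Fin k // v i + x - vbar > 1 / 2} : ℝ) / k)
    (hmm : vmed > vbar) :
    ⌈(k : ℝ) / 2⌉₊ ≤ Nat.card {i : Fin k // v i > vbar} ∧
    γ (1 / 2) = (Nat.card {i : Fin k // v i > vbar} : ℝ) / k ∧
    γ (1 / 2) ≥ 1 / 2 ∧
    0 ≤ γ (1 / 2) - 1 / 2 := by
  classical
  have hcard : ∀ (P : Fin k → Prop), Nat.card {i : Fin k // P i}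
      = (Finset.univ.filter P).card := by
    intro P
    rw [Nat.card_eq_fintype_card, Fintype.card_subtype]
  obtain ⟨m, hm, hle⟩ : ∃ m : Fin k, vbar < v m ∧ k ≤ 2 * (k - (m : ℕ)) := by
    by_cases hpar : k % 2 = 1
    · simp only [hpar, if_true] at hvmed
      refine ⟨⟨(k - 1) / 2, by omega⟩, hvmed ▸ hmm, ?_⟩
      simp only [Fin.val_mk]
      omega
    · simp only [hpar, if_false] at hvmed
      have hk2 : k % 2 = 0 := by omega
      refine ⟨⟨k / 2, by omega⟩, ?_, by simp only [Fin.val_mk]; omega⟩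
      have hab : v ⟨k / 2 - 1, by omega⟩ ≤ v ⟨k / 2, by omega⟩ :=
        hmono (Fin.mk_le_mk.mpr (by omega))
      rw [hvmed] at hmm
      linarith
  set N := Nat.card {i : Fin k // v i > vbar} with hN
  have hsub : Finset.Ici m ⊆ Finset.univ.filter (fun i => v i > vbar) := by
    intro i hi
    simp only [Finset.mem_Ici] at hi
    simp only [Finset.mem_filter, Finset.mem_univ, true_and]
    exact lt_of_lt_of_le hm (hmono hi)
  have hNge : k - (m : ℕ) ≤ N := by
    rw [hN, hcard]
    calc k - (m : ℕ) = (Finset.Ici m).card := (Fin.card_Ici m).symm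
      _ ≤ _ := Finset.card_le_card hsub
  have h2N : k ≤ 2 * N := by omega
  have hk0 : (0 : ℝ) < k := by exact_mod_cast hk
  have hceil : ⌈(k : ℝ) / 2⌉₊ ≤ N := by
    rw [Nat.ceil_le]
    have : (k : ℝ) ≤ 2 * N := by exact_mod_cast h2N
    linarith
  have hγval : γ (1 / 2) = (N : ℝ) / k := by
    rw [hγ, hN, hcard, hcard]
    congr 3
    ext i
    simp only [Finset.mem_filter, Finset.mem_univ, true_and]
    constructor <;> intro h <;> [linarith; linarith]
  have hhalf : (1 : ℝ) / 2 ≤ (N : ℝ) / k := by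
    rw [div_le_div_iff₀ (by norm_num) hk0]
    have : (k : ℝ) ≤ 2 * N := by exact_mod_cast h2N
    linarith
  refine ⟨hceil, hγval, by rw [hγval]; exact hhalf, by rw [hγval]; linarith⟩
end

section
/- Let v₁ ≤ v₂ ≤ v₃ ≤ v₄ be real numbers with 0 ≤ vᵢ ≤ 1 for all i, mean v̄ = (v₁+v₂+v₃+v₄)/4, and median v_med = (v₂+v₃)/2. If v₁ ≤ 1/2 (Party B wins a seat), then the mean-median score satisfies MM = v_med − v̄ ≥ v̄ − 3/4. In particular, if additionally v̄ > 3/4, then MM > 0. -/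
/-- paradox forced by arithmetic: for four ordered vote shares in `[0,1]`,
if `v₁ ≤ 1/2` (Party B wins a seat) then `MM = v_med − v̄ ≥ v̄ − 3/4`; in particular
if also `v̄ > 3/4` then `MM > 0`. -/
theorem paradox_forced_by_arithmetic
    (v1 v2 v3 v4 : ℝ) (h12 : v1 ≤ v2) (h23 : v2 ≤ v3) (h34 : v3 ≤ v4)
    (h0 : 0 ≤ v1) (h1 : v4 ≤ 1)
    (vbar : ℝ) (hvbar : vbar = (v1 + v2 + v3 + v4) / 4)
    (vmed : ℝ) (hvmed : vmed = (v2 + v3) / 2)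
    (MM : ℝ) (hMM : MM = vmed - vbar)
    (hBseat : v1 ≤ 1 / 2) :
    MM ≥ vbar - 3 / 4 ∧ (vbar > 3 / 4 → MM > 0) := by
  subst hvbar hvmed hMM
  constructor
  · linarith
  · intro h; linarith
end

section
/- Let v₁ ≤ v₂ ≤ v₃ ≤ v₄ be real numbers with mean v̄ = (v₁+v₂+v₃+v₄)/4, and suppose there is a real number Q with vᵢ ≤ Q for all i and Q < 2v̄ − 1/2. Then v₂ > 1/2; that is, at most one district has Party A vote share at most 1/2 (Party B can win at most one seat). -/
/-- geography bound: if all four ordered vote shares are at most `Q`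
with `Q < 2v̄ − 1/2`, then `v₂ > 1/2`: Party B can win at most one seat. -/
theorem geography_bound_at_most_one_B_seat
    (v1 v2 v3 v4 : ℝ) (h12 : v1 ≤ v2) (h23 : v2 ≤ v3) (h34 : v3 ≤ v4)
    (vbar : ℝ) (hvbar : vbar = (v1 + v2 + v3 + v4) / 4)
    (Q : ℝ) (hQ1 : v1 ≤ Q) (hQ2 : v2 ≤ Q) (hQ3 : v3 ≤ Q) (hQ4 : v4 ≤ Q)
    (hQ : Q < 2 * vbar - 1 / 2) :
    v2 > 1 / 2 := by
  linarith
end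

section
/- Let v₁ ≤ v₂ ≤ v₃ ≤ v₄ be real numbers with mean v̄ = (v₁+v₂+v₃+v₄)/4 and median v_med = (v₂+v₃)/2, and suppose there is a real number Q with vᵢ ≤ Q for all i and Q < 2v̄ − 1/2. If v₁ ≤ 1/2 (Party B wins a seat), then the mean-median score satisfies MM = v_med − v̄ > 0. -/
/-- paradox forced by geography: if all four ordered vote shares are at
most `Q` with `Q < 2v̄ − 1/2` and `v₁ ≤ 1/2` (Party B wins a seat), then the
mean-median score `MM = v_med − v̄` is positive. -/
theorem paradox_forced_by_geography
    (v1 v2 v3 v4 : ℝ) (h12 : v1 ≤ v2) (h23 : v2 ≤ v3) (h34 : v3 ≤ v4)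
    (vbar : ℝ) (hvbar : vbar = (v1 + v2 + v3 + v4) / 4)
    (vmed : ℝ) (hvmed : vmed = (v2 + v3) / 2)
    (Q : ℝ) (hQ1 : v1 ≤ Q) (hQ2 : v2 ≤ Q) (hQ3 : v3 ≤ Q) (hQ4 : v4 ≤ Q)
    (hQ : Q < 2 * vbar - 1 / 2)
    (MM : ℝ) (hMM : MM = vmed - vbar)
    (hBseat : v1 ≤ 1 / 2) :
    MM > 0 := by
  subst hvbar hvmed hMM; linarith
end

section
/- Let k ≥ 1 be an odd integer and let v = (v₁,…,v_k) ∈ ℝ^k satisfy 0 ≤ v₁ ≤ ⋯ ≤ v_k ≤ 1, with mean v̄ = (1/k)Σᵢvᵢ and median v_med = v_{(k+1)/2}. Let PG = (1/k) Σᵢ₌₁^k |vᵢ + v_{k+1−i} − 2v̄| and MM = v_med − v̄. Then PG ≥ (4/k)·|MM|. -/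
/-- for odd `k`, the partisan Gini score
`PG = (1/k) Σᵢ |vᵢ + v_{k+1−i} − 2v̄|` satisfies `PG ≥ (4/k)·|MM|`
where `MM = v_med − v̄`. -/
theorem partisan_gini_lower_bound_odd
    (k : ℕ) (hk : 1 ≤ k) (hodd : k % 2 = 1) (v : Fin k → ℝ)
    (hmono : Monotone v) (h0 : ∀ i, 0 ≤ v i) (h1 : ∀ i, v i ≤ 1)
    (vbar : ℝ) (hvbar : vbar = (∑ i, v i) / k)
    (vmed : ℝ) (hvmed : vmed = v ⟨(k - 1) / 2, by omega⟩)
    (PG : ℝ) (hPG : PG = (1 / k) * ∑ i, |v i + v i.rev - 2 * vbar|)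
    (MM : ℝ) (hMM : MM = vmed - vbar) :
    PG ≥ (4 / k) * |MM| := by
  have hk0 : (0:ℝ) < (k:ℝ) := by exact_mod_cast hk
  set m : Fin k := ⟨(k - 1) / 2, by omega⟩ with hm
  have hrevm : m.rev = m := by
    ext
    simp only [Fin.val_rev, hm]
    omega
  set f : Fin k → ℝ := fun i => v i + v i.rev - 2 * vbar with hf
  have hrevsum : ∑ i : Fin k, v i.rev = ∑ i, v i :=
    Fintype.sum_bijective Fin.rev Fin.rev_bijective (fun i => v (Fin.rev i)) v (fun i => rfl)
  have hsum0 : ∑ i, f i = 0 := by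
    simp only [hf, Finset.sum_sub_distrib, Finset.sum_add_distrib, hrevsum,
      Finset.sum_const, Finset.card_univ, Fintype.card_fin, nsmul_eq_mul, hvbar]
    field_simp
    ring
  have hfm : f m = 2 * MM := by
    simp only [hf, hrevm, hMM, hvmed]
    ring
  have hmem : m ∈ Finset.univ := Finset.mem_univ m
  have hsplit : ∑ i, |f i| = |f m| + ∑ i ∈ Finset.univ.erase m, |f i| :=
    (Finset.add_sum_erase _ _ hmem).symm
  have hrest : ∑ i ∈ Finset.univ.erase m, f i = -f m := by
    have := Finset.add_sum_erase Finset.univ f hmem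
    rw [hsum0] at this
    linarith
  have hrestabs : |f m| ≤ ∑ i ∈ Finset.univ.erase m, |f i| := by
    calc |f m| = |∑ i ∈ Finset.univ.erase m, f i| := by rw [hrest, abs_neg]
    _ ≤ ∑ i ∈ Finset.univ.erase m, |f i| := Finset.abs_sum_le_sum_abs _ _
  have hbig : 4 * |MM| ≤ ∑ i, |f i| := by
    have h2 : 2 * |MM| = |f m| := by rw [hfm, abs_mul]; simp
    rw [hsplit]
    linarith
  have hPG' : PG = (1 / k) * ∑ i, |f i| := hPG
  rw [hPG', ge_iff_le, div_mul_eq_mul_div, one_div, inv_mul_eq_div,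
    div_le_div_iff₀ hk0 hk0]
  nlinarith [hbig, abs_nonneg MM]
end

section
/- Let k ≥ 2 be an even integer and let v = (v₁,…,v_k) ∈ ℝ^k satisfy 0 ≤ v₁ ≤ ⋯ ≤ v_k ≤ 1, with mean v̄ = (1/k)Σᵢvᵢ and median v_med = (v_{k/2} + v_{k/2+1})/2. Let PG = (1/k) Σᵢ₌₁^k |vᵢ + v_{k+1−i} − 2v̄| and MM = v_med − v̄. Then PG ≥ (8/k)·|MM|. -/
/-- for even `k ≥ 2`, the partisan Gini score
`PG = (1/k) Σᵢ |vᵢ + v_{k+1−i} − 2v̄|` satisfies `PG ≥ (8/k)·|MM|`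
where `MM = v_med − v̄`. -/
theorem partisan_gini_lower_bound_even
    (k : ℕ) (hk : 2 ≤ k) (heven : k % 2 = 0) (v : Fin k → ℝ)
    (hmono : Monotone v) (h0 : ∀ i, 0 ≤ v i) (h1 : ∀ i, v i ≤ 1)
    (vbar : ℝ) (hvbar : vbar = (∑ i, v i) / k)
    (vmed : ℝ) (hvmed : vmed = (v ⟨k / 2 - 1, by omega⟩ + v ⟨k / 2, by omega⟩) / 2)
    (PG : ℝ) (hPG : PG = (1 / k) * ∑ i, |v i + v i.rev - 2 * vbar|)
    (MM : ℝ) (hMM : MM = vmed - vbar) :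
    PG ≥ (8 / k) * |MM| := by
  have hkpos : (0:ℝ) < k := by positivity
  set x : Fin k → ℝ := fun i => v i + v i.rev - 2 * vbar with hx
  have hj1 : k / 2 - 1 < k := by omega
  have hj2 : k / 2 < k := by omega
  set j1 : Fin k := ⟨k / 2 - 1, hj1⟩ with hj1def
  set j2 : Fin k := ⟨k / 2, hj2⟩ with hj2def
  have hne : j1 ≠ j2 := by simp [hj1def, hj2def, Fin.ext_iff]; omega
  have hrev1 : j1.rev = j2 := by simp [hj1def, hj2def, Fin.ext_iff, Fin.rev]; omega
  have hrev2 : j2.rev = j1 := by simp [hj1def, hj2def, Fin.ext_iff, Fin.rev]; omega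
  have hx1 : x j1 = 2 * MM := by
    simp only [hx, hrev1, hMM, hvmed]; ring
  have hx2 : x j2 = 2 * MM := by
    simp only [hx, hrev2, hMM, hvmed]; ring
  have hsumrev : ∑ i : Fin k, v i.rev = ∑ i, v i :=
    Fintype.sum_bijective Fin.rev Fin.rev_bijective (fun i => v i.rev) v (fun i => rfl)
  have hsum : ∑ i, x i = 0 := by
    simp only [hx, Finset.sum_sub_distrib, Finset.sum_add_distrib, hsumrev]
    rw [hvbar, Finset.sum_const, Finset.card_univ, Fintype.card_fin, nsmul_eq_mul]
    field_simp
    ring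
  -- split the sum
  have hsub : ({j1, j2} : Finset (Fin k)) ⊆ Finset.univ := Finset.subset_univ _
  have hsplit : ∀ f : Fin k → ℝ, ∑ i, f i = f j1 + f j2 + ∑ i ∈ Finset.univ \ {j1, j2}, f i := by
    intro f
    rw [← Finset.sum_sdiff hsub, Finset.sum_pair hne]
    ring
  have hrest : ∑ i ∈ Finset.univ \ {j1, j2}, x i = -(4 * MM) := by
    have := hsplit x
    rw [hsum, hx1, hx2] at this
    linarith
  have habs : |∑ i ∈ Finset.univ \ {j1, j2}, x i| ≤ ∑ i ∈ Finset.univ \ {j1, j2}, |x i| :=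
    Finset.abs_sum_le_sum_abs _ _
  rw [hrest] at habs
  have h4 : 4 * |MM| ≤ ∑ i ∈ Finset.univ \ {j1, j2}, |x i| := by
    calc 4 * |MM| = |(-(4 * MM))| := by rw [abs_neg, abs_mul]; simp
    _ ≤ _ := habs
  have hbig : 8 * |MM| ≤ ∑ i, |x i| := by
    rw [hsplit (fun i => |x i|)]
    have h1' : |x j1| = 2 * |MM| := by rw [hx1, abs_mul]; simp
    have h2' : |x j2| = 2 * |MM| := by rw [hx2, abs_mul]; simp
    rw [h1', h2']
    linarith
  rw [hPG, ge_iff_le, div_mul_eq_mul_div, div_le_iff₀ hkpos]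
  have heq : 1 / (k:ℝ) * (∑ i, |v i + v i.rev - 2 * vbar|) * k
      = ∑ i, |v i + v i.rev - 2 * vbar| := by field_simp
  rw [heq]
  exact hbig
end

section
/- Let v₁ ≤ v₂ ≤ v₃ be real numbers with mean v̄ = (v₁+v₂+v₃)/3 and median v_med = v₂. Let PG = (1/3) Σᵢ₌₁³ |vᵢ + v_{4−i} − 2v̄| and MM = v_med − v̄. Then PG = (4/3)·|MM|. -/
/-- for `k = 3` districts, `PG = (4/3)·|MM|` exactly. -/
theorem partisan_gini_eq_three_districts
    (v1 v2 v3 : ℝ) (h12 : v1 ≤ v2) (h23 : v2 ≤ v3)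
    (vbar : ℝ) (hvbar : vbar = (v1 + v2 + v3) / 3)
    (vmed : ℝ) (hvmed : vmed = v2)
    (PG : ℝ) (hPG : PG = (1 / 3) * (|v1 + v3 - 2 * vbar| + |v2 + v2 - 2 * vbar|
      + |v3 + v1 - 2 * vbar|))
    (MM : ℝ) (hMM : MM = vmed - vbar) :
    PG = (4 / 3) * |MM| := by
  subst hvbar hPG hMM; rw [hvmed]
  rcases le_total (v1 + v3) (2 * v2) with h | h
  · rw [abs_of_nonpos (by linarith), abs_of_nonneg (by linarith),
      abs_of_nonpos (by linarith), abs_of_nonneg (by linarith)]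
    ring
  · rw [abs_of_nonneg (by linarith), abs_of_nonpos (by linarith),
      abs_of_nonneg (by linarith), abs_of_nonpos (by linarith)]
    ring
end

section
/- Let v₁ ≤ v₂ ≤ v₃ ≤ v₄ be real numbers with mean v̄ = (v₁+v₂+v₃+v₄)/4 and median v_med = (v₂+v₃)/2. Let PG = (1/4) Σᵢ₌₁⁴ |vᵢ + v_{5−i} − 2v̄| and MM = v_med − v̄. Then PG = 2·|MM|. -/
/-- for `k = 4` districts, `PG = 2·|MM|` exactly. -/
theorem partisan_gini_eq_four_districts
    (v1 v2 v3 v4 : ℝ) (h12 : v1 ≤ v2) (h23 : v2 ≤ v3) (h34 : v3 ≤ v4)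
    (vbar : ℝ) (hvbar : vbar = (v1 + v2 + v3 + v4) / 4)
    (vmed : ℝ) (hvmed : vmed = (v2 + v3) / 2)
    (PG : ℝ) (hPG : PG = (1 / 4) * (|v1 + v4 - 2 * vbar| + |v2 + v3 - 2 * vbar|
      + |v3 + v2 - 2 * vbar| + |v4 + v1 - 2 * vbar|))
    (MM : ℝ) (hMM : MM = vmed - vbar) :
    PG = 2 * |MM| := by
  subst hvbar hvmed hPG hMM
  have h1 : v1 + v4 - 2 * ((v1 + v2 + v3 + v4) / 4)
      = -(v2 + v3 - 2 * ((v1 + v2 + v3 + v4) / 4)) := by ring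
  have h2 : (v2 + v3) / 2 - (v1 + v2 + v3 + v4) / 4
      = (1 / 2) * (v2 + v3 - 2 * ((v1 + v2 + v3 + v4) / 4)) := by ring
  rw [h1, h2, abs_neg, abs_mul, show v3 + v2 = v2 + v3 by ring, show v4 + v1 = v1 + v4 by ring, h1, abs_neg]
  rw [abs_of_nonneg (by norm_num : (0:ℝ) ≤ 1/2)]
  ring
end

section
/- For a vote-share vector v = (v₁,…,v₅) ∈ ℝ⁵ with v₁ ≤ ⋯ ≤ v₅, define v̄ = (1/5)Σᵢvᵢ, MM(v) = v₃ − v̄, and PG(v) = (1/5) Σᵢ₌₁⁵ |vᵢ + v₆₋ᵢ − 2v̄|. Then the vectors v = (0.2, 0.3, 0.4, 0.5, 0.7) and v″ = (0.19, 0.31, 0.4, 0.5, 0.7) satisfy MM(v) = MM(v″) (both equal −0.02) but PG(v) ≠ PG(v″) (they equal 0.048 and 0.04, respectively). Consequently, for k = 5 the partisan Gini score is not determined by the mean-median score. -/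
/-- Mean of a 5-district vote-share vector. -/
noncomputable def vbar5 (v : Fin 5 → ℝ) : ℝ := (∑ i, v i) / 5

/-- Mean-median score for 5 districts: median (third-smallest entry) minus mean. -/
noncomputable def MM5 (v : Fin 5 → ℝ) : ℝ := v 2 - vbar5 v

/-- Partisan Gini score for 5 districts under uniform partisan swing:
`PG = (1/5) Σᵢ₌₁⁵ |vᵢ + v₆₋ᵢ − 2v̄|`. -/
noncomputable def PG5 (v : Fin 5 → ℝ) : ℝ := (1 / 5) * ∑ i, |v i + v i.rev - 2 * vbar5 v|

/-- `v = (0.2, 0.3, 0.4, 0.5, 0.7)` and `v″ = (0.19, 0.31, 0.4, 0.5, 0.7)`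
have equal mean-median scores (both `−0.02`) but different partisan Gini scores
(`0.048` and `0.04`); hence for `k = 5` the partisan Gini score is not a function of
the mean-median score. -/
theorem partisan_gini_not_determined_by_mean_median :
    let v : Fin 5 → ℝ := ![0.2, 0.3, 0.4, 0.5, 0.7]
    let v'' : Fin 5 → ℝ := ![0.19, 0.31, 0.4, 0.5, 0.7]
    MM5 v = MM5 v'' ∧ MM5 v = -0.02 ∧ MM5 v'' = -0.02 ∧
    PG5 v = 0.048 ∧ PG5 v'' = 0.04 ∧ PG5 v ≠ PG5 v'' ∧
    ¬ ∃ f : ℝ → ℝ, ∀ w : Fin 5 → ℝ, Monotone w → (∀ i, 0 ≤ w i) → (∀ i, w i ≤ 1) →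
      PG5 w = f (MM5 w) := by
  intro v v''
  have hmm : MM5 v = -0.02 := by
    simp [MM5, vbar5, Fin.sum_univ_five, v]; norm_num
  have hmm'' : MM5 v'' = -0.02 := by
    simp [MM5, vbar5, Fin.sum_univ_five, v'']; norm_num
  have r : ∀ i : Fin 5, i.rev = ![4, 3, 2, 1, 0] i := by decide
  have hpg : PG5 v = 0.048 := by
    simp [PG5, vbar5, Fin.sum_univ_five, v, r]
    norm_num [abs_of_nonneg, abs_of_nonpos]
  have hpg'' : PG5 v'' = 0.04 := by
    simp [PG5, vbar5, Fin.sum_univ_five, v'', r]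
    norm_num [abs_of_nonneg, abs_of_nonpos]
  have hne : PG5 v ≠ PG5 v'' := by rw [hpg, hpg'']; norm_num
  refine ⟨by rw [hmm, hmm''], hmm, hmm'', hpg, hpg'', hne, ?_⟩
  rintro ⟨f, hf⟩
  have hv : Monotone v := by
    rw [Fin.monotone_iff_le_succ]
    intro i; fin_cases i <;> simp [v] <;> norm_num
  have hv'' : Monotone v'' := by
    rw [Fin.monotone_iff_le_succ]
    intro i; fin_cases i <;> simp [v''] <;> norm_num
  have h0 : ∀ i, (0:ℝ) ≤ v i := by intro i; fin_cases i <;> norm_num [v]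
  have h1 : ∀ i, v i ≤ 1 := by intro i; fin_cases i <;> norm_num [v]
  have h0'' : ∀ i, (0:ℝ) ≤ v'' i := by intro i; fin_cases i <;> norm_num [v'']
  have h1'' : ∀ i, v'' i ≤ 1 := by intro i; fin_cases i <;> norm_num [v'']
  have e1 := hf v hv h0 h1
  have e2 := hf v'' hv'' h0'' h1''
  apply hne
  rw [e1, e2, hmm, hmm'']
end
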